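/- Let C be a ribbon Ab-category which is abelian with exact tensor product, and let a morphism of short exact sequences 0 → A' → A → A'' → 0 with vertical maps f', f, f'' be given. Then the categorical trace is additive: tr_C(f) = tr_C(f') + tr_C(f''). -/

import Mathlib

open CategoryTheory MonoidalCategory

universe v u

variable {C : Type u} [Category.{v} C] [MonoidalCategory C]
  [BraidedCategory C] [RightRigidCategory C]

/-- A twist, making `C` into a ribbon category. -/
class RibbonTwist (C : Type u) [Category.{v} C] [MonoidalCategory C]
    [BraidedCategory C] [RightRigidCategory C] where
  θ : ∀ V : C, V ⟶ V
  θ_isIso : ∀ V : C, IsIso (θ V)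
  θ_natural : ∀ {V W : C} (f : V ⟶ W), f ≫ θ W = θ V ≫ f
  θ_tensor : ∀ V W : C, θ (V ⊗ W) = (θ V ⊗ₘ θ W) ≫ (β_ V W).hom ≫ (β_ W V).hom
  θ_dual : ∀ V : C, θ (Vᘁ) = (θ V)ᘁ

variable [RibbonTwist C]

open RibbonTwist

/-- The morphism `b'_V : 𝟙 ⟶ V* ⊗ V`. -/
noncomputable def coev' (V : C) : 𝟙_ C ⟶ Vᘁ ⊗ V :=
  η_ V (Vᘁ) ≫ (β_ V (Vᘁ)).hom ≫ ((Vᘁ) ◁ θ V)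

/-- The morphism `d'_V : V ⊗ V* ⟶ 𝟙`. -/
noncomputable def ev' (V : C) : V ⊗ (Vᘁ) ⟶ 𝟙_ C :=
  (θ V ▷ (Vᘁ)) ≫ (β_ V (Vᘁ)).hom ≫ ε_ V (Vᘁ)

/-- The left partial trace `tr_L`. -/
noncomputable def trL {V W : C} (f : V ⊗ W ⟶ V ⊗ W) : W ⟶ W :=
  (λ_ W).inv ≫ (coev' V ▷ W) ≫ (α_ _ _ _).hom ≫ ((Vᘁ) ◁ f) ≫
    (α_ _ _ _).inv ≫ ((ε_ V (Vᘁ)) ▷ W) ≫ (λ_ W).hom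

/-- The right partial trace `tr_R`. -/
noncomputable def trR {V W : C} (f : V ⊗ W ⟶ V ⊗ W) : V ⟶ V :=
  (ρ_ V).inv ≫ (V ◁ η_ W (Wᘁ)) ≫ (α_ _ _ _).inv ≫ (f ▷ (Wᘁ)) ≫
    (α_ _ _ _).hom ≫ (V ◁ ev' W) ≫ (ρ_ V).hom

/-- The categorical trace. -/
noncomputable def trC {V : C} (f : V ⟶ V) : 𝟙_ C ⟶ 𝟙_ C :=
  η_ V (Vᘁ) ≫ (f ▷ (Vᘁ)) ≫ ev' V

/-- `InI V U` : `U` belongs to the ideal `I_V` generated by `V`, i.e. `U` is a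
retract of `V ⊗ W` for some `W`. -/
def InI (V U : C) : Prop :=
  ∃ (W : C) (α : U ⟶ V ⊗ W) (β : V ⊗ W ⟶ U), α ≫ β = 𝟙 U

/-- A full subcategory (given by a predicate on objects) is an ideal if it is closed
under tensoring with arbitrary objects and under retracts. -/
structure IsIdeal (P : C → Prop) : Prop where
  tensor_mem : ∀ {V : C}, P V → ∀ W : C, P (V ⊗ W)
  retract_mem : ∀ {V W : C}, P V → ∀ (f : W ⟶ V) (g : V ⟶ W), f ≫ g = 𝟙 W → P W

section TraceAdditivity

open CategoryTheory.Limits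

/-- The braiding gives a natural isomorphism `tensorLeft X ≅ tensorRight X`. -/
noncomputable def tensorLeftIsoTensorRightAux (X : C) : tensorLeft X ≅ tensorRight X :=
  NatIso.ofComponents (fun Y => β_ X Y) (fun {Y Z} g => by
    simpa using BraidedCategory.braiding_naturality_right X g)

/-- Naturality of the twisted evaluation `ev'`. -/
lemma whiskerRight_comp_ev' {X Y : C} (f : X ⟶ Y) :
    (f ▷ (Yᘁ)) ≫ ev' Y = (X ◁ (fᘁ)) ≫ ev' X := by
  dsimp only [ev']
  calc (f ▷ (Yᘁ)) ≫ (θ Y ▷ (Yᘁ)) ≫ (β_ Y (Yᘁ)).hom ≫ ε_ Y (Yᘁ)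
      = ((f ≫ θ Y) ▷ (Yᘁ)) ≫ (β_ Y (Yᘁ)).hom ≫ ε_ Y (Yᘁ) := by
        rw [comp_whiskerRight, Category.assoc]
    _ = (θ X ▷ (Yᘁ)) ≫ (f ▷ (Yᘁ)) ≫ (β_ Y (Yᘁ)).hom ≫ ε_ Y (Yᘁ) := by
        rw [θ_natural, comp_whiskerRight, Category.assoc]
    _ = (θ X ▷ (Yᘁ)) ≫ (β_ X (Yᘁ)).hom ≫ ((Yᘁ) ◁ f) ≫ ε_ Y (Yᘁ) := by
        rw [← Category.assoc (f ▷ (Yᘁ)), BraidedCategory.braiding_naturality_left,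
          Category.assoc]
    _ = (θ X ▷ (Yᘁ)) ≫ (β_ X (Yᘁ)).hom ≫ ((fᘁ) ▷ X) ≫ ε_ X (Xᘁ) := by
        rw [rightAdjointMate_comp_evaluation]
    _ = (θ X ▷ (Yᘁ)) ≫ (X ◁ (fᘁ)) ≫ (β_ X (Xᘁ)).hom ≫ ε_ X (Xᘁ) := by
        rw [← Category.assoc ((β_ X (Yᘁ)).hom), ← BraidedCategory.braiding_naturality_right,
          Category.assoc]
    _ = (X ◁ (fᘁ)) ≫ (θ X ▷ (Xᘁ)) ≫ (β_ X (Xᘁ)).hom ≫ ε_ X (Xᘁ) := by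
        rw [← Category.assoc, ← whisker_exchange, Category.assoc]

lemma psi_inj {Z X : C} {a b : Z ⟶ (Xᘁ)}
    (h : (a ▷ X) ≫ ε_ X (Xᘁ) = (b ▷ X) ≫ ε_ X (Xᘁ)) : a = b := by
  have h2 := congrArg (tensorRightHomEquiv Z X (Xᘁ) (𝟙_ C)) h
  simp only [tensorRightHomEquiv_whiskerRight_comp_evaluation] at h2
  rwa [cancel_mono] at h2

lemma phi_inj {Z X : C} {a b : (Xᘁ) ⟶ Z}
    (h : η_ X (Xᘁ) ≫ (X ◁ a) = η_ X (Xᘁ) ≫ (X ◁ b)) : a = b := by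
  have h2 := congrArg (tensorLeftHomEquiv (𝟙_ C) X (Xᘁ) Z).symm h
  simp only [tensorLeftHomEquiv_symm_coevaluation_comp_whiskerLeft] at h2
  rwa [cancel_epi] at h2

lemma psi_natural {Z X Y : C} (p : X ⟶ Y) (s : Z ⟶ (Yᘁ)) :
    ((s ≫ (pᘁ)) ▷ X) ≫ ε_ X (Xᘁ) = (Z ◁ p) ≫ (s ▷ Y) ≫ ε_ Y (Yᘁ) := by
  rw [comp_whiskerRight, Category.assoc, rightAdjointMate_comp_evaluation,
    ← Category.assoc, ← whisker_exchange, Category.assoc]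

lemma phi_natural {Z X Y : C} (i : X ⟶ Y) (g : (Xᘁ) ⟶ Z) :
    η_ Y (Yᘁ) ≫ (Y ◁ ((iᘁ) ≫ g)) = (η_ X (Xᘁ) ≫ (X ◁ g)) ≫ (i ▷ Z) := by
  rw [MonoidalCategory.whiskerLeft_comp, ← Category.assoc,
    coevaluation_comp_rightAdjointMate, Category.assoc, Category.assoc,
    whisker_exchange]

section Abelian

variable [Abelian C]

instance tensorLeft_isRightAdjoint' (X : C) : (tensorLeft X).IsRightAdjoint :=
  (tensorLeftAdjunction X (Xᘁ)).isRightAdjoint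

instance tensorRight_isLeftAdjoint' (X : C) : (tensorRight X).IsLeftAdjoint :=
  (tensorRightAdjunction X (Xᘁ)).isLeftAdjoint

instance tensorLeft_preservesFiniteLimits' (X : C) : PreservesFiniteLimits (tensorLeft X) :=
  have : PreservesLimitsOfSize.{0, 0} (tensorLeft X) :=
    (tensorLeftAdjunction X (Xᘁ)).rightAdjoint_preservesLimits
  PreservesLimitsOfSize.preservesFiniteLimits _

instance tensorRight_preservesFiniteColimits' (X : C) :
    PreservesFiniteColimits (tensorRight X) :=
  have : PreservesColimitsOfSize.{0, 0} (tensorRight X) :=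
    (tensorRightAdjunction X (Xᘁ)).leftAdjoint_preservesColimits
  PreservesColimitsOfSize.preservesFiniteColimits _

instance tensorLeft_preservesFiniteColimits' (X : C) :
    PreservesFiniteColimits (tensorLeft X) :=
  have h1 : PreservesColimitsOfSize.{0, 0} (tensorRight X) :=
    (tensorRightAdjunction X (Xᘁ)).leftAdjoint_preservesColimits
  have : PreservesColimitsOfSize.{0, 0} (tensorLeft X) :=
    preservesColimits_of_natIso (tensorLeftIsoTensorRightAux X).symm
  PreservesColimitsOfSize.preservesFiniteColimits _

instance tensorRight_preservesFiniteLimits' (X : C) :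
    PreservesFiniteLimits (tensorRight X) :=
  have h1 : PreservesLimitsOfSize.{0, 0} (tensorLeft X) :=
    (tensorLeftAdjunction X (Xᘁ)).rightAdjoint_preservesLimits
  have : PreservesLimitsOfSize.{0, 0} (tensorRight X) :=
    preservesLimits_of_natIso (tensorLeftIsoTensorRightAux X)
  PreservesLimitsOfSize.preservesFiniteLimits _

lemma whiskerLeft_zero' (X : C) (A B : C) : X ◁ (0 : A ⟶ B) = 0 := by
  simpa using (tensorLeft X).map_zero A B

lemma zero_whiskerRight' (X : C) (A B : C) : (0 : A ⟶ B) ▷ X = 0 := by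
  simpa using (tensorRight X).map_zero A B

lemma rightAdjointMate_zero' {X Y : C} : ((0 : X ⟶ Y)ᘁ) = (0 : (Yᘁ) ⟶ (Xᘁ)) := by
  simp [rightAdjointMate, zero_whiskerRight', whiskerLeft_zero']

/-- The dual short complex of a short complex. -/
noncomputable def dualComplex (S : ShortComplex C) : ShortComplex C :=
  ShortComplex.mk ((S.g)ᘁ) ((S.f)ᘁ)
    (by rw [← comp_rightAdjointMate, S.zero, rightAdjointMate_zero'])

/-- The dual of a short exact sequence is short exact. -/
lemma dualShortExact {S : ShortComplex C} (hS : S.ShortExact) :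
    (dualComplex S).ShortExact := by
  have : Mono S.f := hS.mono_f
  have : Epi S.g := hS.epi_g
  have hmono : Mono ((S.g)ᘁ) := by
    constructor
    intro Z a b hab
    have ha := psi_natural S.g a
    have hb := psi_natural S.g b
    rw [hab, hb] at ha
    have hepiZ : Epi (Z ◁ S.g) := by
      have := preserves_epi_of_preservesColimit (tensorLeft Z) S.g
      simpa using this
    rw [cancel_epi] at ha
    exact psi_inj ha.symm
  have hepi : Epi ((S.f)ᘁ) := by
    constructor
    intro Z a b hab
    have ha := phi_natural S.f a
    have hb := phi_natural S.f b
    rw [hab, hb] at ha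
    have hmonoZ : Mono (S.f ▷ Z) := by
      have := preserves_mono_of_preservesLimit (tensorRight Z) S.f
      simpa using this
    rw [cancel_mono] at ha
    exact phi_inj ha.symm
  have h0 : ((S.g)ᘁ) ≫ ((S.f)ᘁ) = 0 := (dualComplex S).zero
  haveI : Mono ((S.g)ᘁ) := hmono
  have hlim0 : IsLimit (KernelFork.ofι (f := ((S.f)ᘁ)) ((S.g)ᘁ) h0) := by
    refine KernelFork.IsLimit.ofι' _ _ (fun {W} k hk => ?_)
    -- `k : W ⟶ (S.X₂)ᘁ`, `hk : k ≫ (S.f)ᘁ = 0`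
    have h1 : (W ◁ S.f) ≫ ((k ▷ S.X₂) ≫ ε_ S.X₂ ((S.X₂)ᘁ)) = 0 := by
      have h2 := psi_natural S.f k
      rw [hk, zero_whiskerRight', Limits.zero_comp] at h2
      rw [← Category.assoc] at h2 ⊢
      exact h2.symm
    have hSW : ((S.map (tensorLeft W))).ShortExact := hS.map_of_exact _
    obtain ⟨w, hw⟩ := CokernelCofork.IsColimit.desc' hSW.gIsCokernel
      ((k ▷ S.X₂) ≫ ε_ S.X₂ ((S.X₂)ᘁ)) h1
    have hw' : (W ◁ S.g) ≫ w = (k ▷ S.X₂) ≫ ε_ S.X₂ ((S.X₂)ᘁ) := by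
      exact hw
    refine ⟨(tensorRightHomEquiv W S.X₃ ((S.X₃)ᘁ) (𝟙_ C)) w ≫ (λ_ ((S.X₃)ᘁ)).hom, ?_⟩
    apply psi_inj
    rw [psi_natural]
    have hsw : ((((tensorRightHomEquiv W S.X₃ ((S.X₃)ᘁ) (𝟙_ C)) w ≫
        (λ_ ((S.X₃)ᘁ)).hom) ▷ S.X₃) ≫ ε_ S.X₃ ((S.X₃)ᘁ)) = w := by
      apply (tensorRightHomEquiv W S.X₃ ((S.X₃)ᘁ) (𝟙_ C)).injective
      rw [tensorRightHomEquiv_whiskerRight_comp_evaluation]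
      simp
    rw [hsw, hw']
  have hlim : IsLimit (KernelFork.ofι (dualComplex S).f (dualComplex S).zero) := hlim0
  exact { exact := (dualComplex S).exact_of_f_is_kernel hlim,
          mono_f := hmono, epi_g := hepi }

/-- Additivity of the categorical trace with respect to a short exact sequence. -/
lemma trace_additive_aux {A' A A'' : C} (i : A' ⟶ A) (p : A ⟶ A'')
    (hz : i ≫ p = 0) (hses : (ShortComplex.mk i p hz).ShortExact)
    (f' : A' ⟶ A') (fm : A ⟶ A) (f'' : A'' ⟶ A'')
    (c1 : i ≫ fm = f' ≫ i) (c2 : p ≫ f'' = fm ≫ p) :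
    trC fm = trC f' + trC f'' := by
  have hmono : Mono i := hses.mono_f
  have hepi : Epi p := hses.epi_g
  have hD : (dualComplex (ShortComplex.mk i p hz)).ShortExact := dualShortExact hses
  have hdz : (rightAdjointMate p) ≫ (rightAdjointMate i) = (0 : ((A'')ᘁ) ⟶ ((A')ᘁ)) :=
    (dualComplex (ShortComplex.mk i p hz)).zero
  -- mapped short exact sequences
  have hT2 : (((ShortComplex.mk i p hz).map (tensorRight ((A'')ᘁ)))).ShortExact :=
    hses.map_of_exact _
  have hDA : (((dualComplex (ShortComplex.mk i p hz)).map (tensorLeft A))).ShortExact :=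
    hD.map_of_exact _
  have hDA' : (((dualComplex (ShortComplex.mk i p hz)).map (tensorLeft A'))).ShortExact :=
    hD.map_of_exact _
  have hDA'' : (((dualComplex (ShortComplex.mk i p hz)).map (tensorLeft A''))).ShortExact :=
    hD.map_of_exact _
  haveI epi1 : Epi (A' ◁ (rightAdjointMate i)) := hDA'.epi_g
  haveI epi2 : Epi (p ▷ ((A'')ᘁ)) := hT2.epi_g
  haveI mono2 : Mono (A'' ◁ (rightAdjointMate p)) := hDA''.mono_f
  -- whisker exchange identities
  have wex_ip : (A' ◁ (rightAdjointMate p)) ≫ (i ▷ (Aᘁ)) = (i ▷ ((A'')ᘁ)) ≫ (A ◁ (rightAdjointMate p)) :=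
    whisker_exchange _ _
  have wex_ii : (A' ◁ (rightAdjointMate i)) ≫ (i ▷ ((A')ᘁ)) = (i ▷ (Aᘁ)) ≫ (A ◁ (rightAdjointMate i)) :=
    whisker_exchange _ _
  have wex_pp : (A ◁ (rightAdjointMate p)) ≫ (p ▷ (Aᘁ)) = (p ▷ ((A'')ᘁ)) ≫ (A'' ◁ (rightAdjointMate p)) :=
    whisker_exchange _ _
  have wex_fmi : (A ◁ (rightAdjointMate i)) ≫ (fm ▷ ((A')ᘁ)) = (fm ▷ (Aᘁ)) ≫ (A ◁ (rightAdjointMate i)) :=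
    whisker_exchange _ _
  have wex_fp : (A'' ◁ (rightAdjointMate p)) ≫ (f'' ▷ (Aᘁ)) = (f'' ▷ ((A'')ᘁ)) ≫ (A'' ◁ (rightAdjointMate p)) :=
    whisker_exchange _ _
  -- composite-with-dual-zero identities
  have hzl : (A ◁ (rightAdjointMate p)) ≫ (A ◁ (rightAdjointMate i)) = 0 := by
    rw [← MonoidalCategory.whiskerLeft_comp, hdz, whiskerLeft_zero']
  have hzr : (i ▷ ((A'')ᘁ)) ≫ (p ▷ ((A'')ᘁ)) = 0 := by
    rw [← comp_whiskerRight, hz, zero_whiskerRight']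
  have hzr2 : (i ▷ (Aᘁ)) ≫ (p ▷ (Aᘁ)) = 0 := by
    rw [← comp_whiskerRight, hz, zero_whiskerRight']
  -- the object `Q`
  set n : A' ⊗ ((A'')ᘁ) ⟶ A ⊗ (Aᘁ) := (i ▷ ((A'')ᘁ)) ≫ (A ◁ (rightAdjointMate p)) with hn
  set π : A ⊗ (Aᘁ) ⟶ cokernel n := cokernel.π n with hπ
  have hnπ : n ≫ π = 0 := cokernel.condition n
  -- the three maps out of `Q`
  have hne : n ≫ ev' A = 0 := by
    rw [hn, Category.assoc, ← whiskerRight_comp_ev' p, ← Category.assoc, hzr,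
      Limits.zero_comp]
  set eQ : cokernel n ⟶ 𝟙_ C := cokernel.desc n (ev' A) hne with heQ
  have hπe : π ≫ eQ = ev' A := cokernel.π_desc n (ev' A) hne
  have hnd : n ≫ (A ◁ (rightAdjointMate i)) = 0 := by
    rw [hn, Category.assoc, hzl, Limits.comp_zero]
  set dQ : cokernel n ⟶ A ⊗ ((A')ᘁ) := cokernel.desc n (A ◁ (rightAdjointMate i)) hnd with hdQ
  have hπd : π ≫ dQ = A ◁ (rightAdjointMate i) := cokernel.π_desc n _ hnd
  have hne1 : n ≫ (p ▷ (Aᘁ)) = 0 := by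
    rw [hn, Category.assoc, wex_pp, ← Category.assoc, hzr, Limits.zero_comp]
  set e1Q : cokernel n ⟶ A'' ⊗ (Aᘁ) := cokernel.desc n (p ▷ (Aᘁ)) hne1 with he1Q
  have hπe1 : π ≫ e1Q = p ▷ (Aᘁ) := cokernel.π_desc n _ hne1
  -- the two maps into `Q`
  obtain ⟨ι₁, hι₁⟩ := CokernelCofork.IsColimit.desc' hDA'.gIsCokernel
    ((i ▷ (Aᘁ)) ≫ π) (show (A' ◁ (rightAdjointMate p)) ≫ (i ▷ (Aᘁ)) ≫ π = 0 by
      rw [← Category.assoc, wex_ip]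
      exact hnπ)
  change A' ⊗ ((A')ᘁ) ⟶ cokernel n at ι₁
  have hι₁' : (A' ◁ (rightAdjointMate i)) ≫ ι₁ = (i ▷ (Aᘁ)) ≫ π := by exact hι₁
  obtain ⟨ι₂, hι₂⟩ : { ι₂ : A'' ⊗ ((A'')ᘁ) ⟶ cokernel n //
      (p ▷ ((A'')ᘁ)) ≫ ι₂ = (A ◁ (rightAdjointMate p)) ≫ π } := CokernelCofork.IsColimit.desc' hT2.gIsCokernel
    ((A ◁ (rightAdjointMate p)) ≫ π) (show (i ▷ ((A'')ᘁ)) ≫ (A ◁ (rightAdjointMate p)) ≫ π = 0 by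
      rw [← Category.assoc]
      exact hnπ)
  have hι₂' : (p ▷ ((A'')ᘁ)) ≫ ι₂ = (A ◁ (rightAdjointMate p)) ≫ π := by simpa using hι₂
  -- compatibilities
  have hι₁d : ι₁ ≫ dQ = i ▷ ((A')ᘁ) := by
    rw [← cancel_epi (A' ◁ (rightAdjointMate i)), ← Category.assoc, hι₁', Category.assoc, hπd,
      ← wex_ii]
  have hι₂d : ι₂ ≫ dQ = 0 := by
    rw [← cancel_epi (p ▷ ((A'')ᘁ)), ← Category.assoc, hι₂', Category.assoc, hπd,
      hzl, Limits.comp_zero]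
  have hι₁e1 : ι₁ ≫ e1Q = 0 := by
    rw [← cancel_epi (A' ◁ (rightAdjointMate i)), ← Category.assoc, hι₁', Category.assoc, hπe1,
      hzr2, Limits.comp_zero]
  have hι₂e1 : ι₂ ≫ e1Q = A'' ◁ (rightAdjointMate p) := by
    rw [← cancel_epi (p ▷ ((A'')ᘁ)), ← Category.assoc, hι₂', Category.assoc, hπe1,
      wex_pp]
  have hι₁e : ι₁ ≫ eQ = ev' A' := by
    rw [← cancel_epi (A' ◁ (rightAdjointMate i)), ← Category.assoc, hι₁', Category.assoc, hπe,
      whiskerRight_comp_ev' i]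
  have hι₂e : ι₂ ≫ eQ = ev' A'' := by
    rw [← cancel_epi (p ▷ ((A'')ᘁ)), ← Category.assoc, hι₂', Category.assoc, hπe,
      whiskerRight_comp_ev' p]
  -- the joint monomorphism property
  have hjoint : ∀ (δ : 𝟙_ C ⟶ cokernel n), δ ≫ dQ = 0 → δ ≫ e1Q = 0 → δ = 0 := by
    intro δ hd he1
    obtain ⟨Z₁, π₁, hπ₁, t, ht⟩ := surjective_up_to_refinements_of_epi π δ
    have h1 : t ≫ (A ◁ (rightAdjointMate i)) = 0 := by
      rw [← hπd, ← Category.assoc, ← ht, Category.assoc, hd, Limits.comp_zero]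
    obtain ⟨Z₂, π₂, hπ₂, s, hs⟩ : ∃ (Z₂ : C) (π₂ : Z₂ ⟶ Z₁) (_ : Epi π₂)
        (s : Z₂ ⟶ A ⊗ ((A'')ᘁ)), π₂ ≫ t = s ≫ (A ◁ (rightAdjointMate p)) := hDA.exact.exact_up_to_refinements t h1
    have hs' : π₂ ≫ t = s ≫ (A ◁ (rightAdjointMate p)) := hs
    have h4 : t ≫ (p ▷ (Aᘁ)) = 0 := by
      rw [← hπe1, ← Category.assoc, ← ht, Category.assoc, he1, Limits.comp_zero]
    have h2 : s ≫ (p ▷ ((A'')ᘁ)) = 0 := by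
      rw [← cancel_mono (A'' ◁ (rightAdjointMate p)), Category.assoc, ← wex_pp, ← Category.assoc,
        ← hs', Category.assoc, h4, Limits.comp_zero, Limits.zero_comp]
    obtain ⟨Z₃, π₃, hπ₃, r, hr⟩ : ∃ (Z₃ : C) (π₃ : Z₃ ⟶ Z₂) (_ : Epi π₃)
        (r : Z₃ ⟶ A' ⊗ ((A'')ᘁ)), π₃ ≫ s = r ≫ (i ▷ ((A'')ᘁ)) := hT2.exact.exact_up_to_refinements s h2
    have hr' : π₃ ≫ s = r ≫ (i ▷ ((A'')ᘁ)) := hr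
    haveI := hπ₁; haveI := hπ₂; haveI := hπ₃
    have h5 : π₃ ≫ π₂ ≫ π₁ ≫ δ = 0 := by
      calc π₃ ≫ π₂ ≫ π₁ ≫ δ = π₃ ≫ π₂ ≫ t ≫ π := by rw [ht]
        _ = π₃ ≫ (π₂ ≫ t) ≫ π := by rw [Category.assoc]
        _ = π₃ ≫ (s ≫ (A ◁ (rightAdjointMate p))) ≫ π := by rw [hs']
        _ = (π₃ ≫ s) ≫ (A ◁ (rightAdjointMate p)) ≫ π := by
            rw [Category.assoc, Category.assoc]
        _ = (r ≫ (i ▷ ((A'')ᘁ))) ≫ (A ◁ (rightAdjointMate p)) ≫ π := by rw [hr']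
        _ = r ≫ (i ▷ ((A'')ᘁ)) ≫ (A ◁ (rightAdjointMate p)) ≫ π := by
            simp only [Category.assoc]
        _ = 0 := by
            have hxy : (i ▷ ((A'')ᘁ)) ≫ (A ◁ (rightAdjointMate p)) ≫ π = 0 := by
              rw [← Category.assoc]; exact hnπ
            rw [hxy, Limits.comp_zero]
    rw [← cancel_epi π₁, ← cancel_epi π₂, ← cancel_epi π₃, Limits.comp_zero,
      Limits.comp_zero, Limits.comp_zero]
    exact h5
  -- the three coevaluation-type morphisms
  set uu : 𝟙_ C ⟶ A ⊗ (Aᘁ) := η_ A (Aᘁ) ≫ (fm ▷ (Aᘁ)) with huu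
  set vv' : 𝟙_ C ⟶ A' ⊗ ((A')ᘁ) := η_ A' ((A')ᘁ) ≫ (f' ▷ ((A')ᘁ)) with hvv'
  set vv'' : 𝟙_ C ⟶ A'' ⊗ ((A'')ᘁ) := η_ A'' ((A'')ᘁ) ≫ (f'' ▷ ((A'')ᘁ)) with hvv''
  have hud : uu ≫ (A ◁ (rightAdjointMate i)) = vv' ≫ (i ▷ ((A')ᘁ)) := by
    calc uu ≫ (A ◁ (rightAdjointMate i))
        = η_ A (Aᘁ) ≫ (fm ▷ (Aᘁ)) ≫ (A ◁ (rightAdjointMate i)) := by rw [huu, Category.assoc]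
      _ = η_ A (Aᘁ) ≫ (A ◁ (rightAdjointMate i)) ≫ (fm ▷ ((A')ᘁ)) := by rw [wex_fmi]
      _ = (η_ A (Aᘁ) ≫ (A ◁ (rightAdjointMate i))) ≫ (fm ▷ ((A')ᘁ)) := by rw [Category.assoc]
      _ = (η_ A' ((A')ᘁ) ≫ (i ▷ ((A')ᘁ))) ≫ (fm ▷ ((A')ᘁ)) := by
          rw [coevaluation_comp_rightAdjointMate i]
      _ = η_ A' ((A')ᘁ) ≫ ((i ≫ fm) ▷ ((A')ᘁ)) := by
          rw [Category.assoc, ← comp_whiskerRight]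
      _ = η_ A' ((A')ᘁ) ≫ ((f' ≫ i) ▷ ((A')ᘁ)) := by rw [c1]
      _ = vv' ≫ (i ▷ ((A')ᘁ)) := by
          rw [comp_whiskerRight, hvv', Category.assoc]
  have hue1 : uu ≫ (p ▷ (Aᘁ)) = vv'' ≫ (A'' ◁ (rightAdjointMate p)) := by
    calc uu ≫ (p ▷ (Aᘁ))
        = η_ A (Aᘁ) ≫ ((fm ≫ p) ▷ (Aᘁ)) := by
          rw [huu, Category.assoc, ← comp_whiskerRight]
      _ = η_ A (Aᘁ) ≫ ((p ≫ f'') ▷ (Aᘁ)) := by rw [← c2]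
      _ = (η_ A (Aᘁ) ≫ (p ▷ (Aᘁ))) ≫ (f'' ▷ (Aᘁ)) := by
          rw [comp_whiskerRight, Category.assoc]
      _ = (η_ A'' ((A'')ᘁ) ≫ (A'' ◁ (rightAdjointMate p))) ≫ (f'' ▷ (Aᘁ)) := by
          rw [coevaluation_comp_rightAdjointMate p]
      _ = η_ A'' ((A'')ᘁ) ≫ (f'' ▷ ((A'')ᘁ)) ≫ (A'' ◁ (rightAdjointMate p)) := by
          rw [Category.assoc, wex_fp]
      _ = vv'' ≫ (A'' ◁ (rightAdjointMate p)) := by rw [hvv'', Category.assoc]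
  -- conclusion
  have hdecomp : uu ≫ π = vv' ≫ ι₁ + vv'' ≫ ι₂ := by
    have hδ : (uu ≫ π - vv' ≫ ι₁ - vv'' ≫ ι₂) = 0 := by
      have t1 : (uu ≫ π) ≫ dQ = vv' ≫ (i ▷ ((A')ᘁ)) := by
        rw [Category.assoc, hπd]; exact hud
      have t2 : (vv' ≫ ι₁) ≫ dQ = vv' ≫ (i ▷ ((A')ᘁ)) := by
        rw [Category.assoc, hι₁d]
      have t3 : (vv'' ≫ ι₂) ≫ dQ = 0 := by
        rw [Category.assoc, hι₂d, Limits.comp_zero]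
      have s1 : (uu ≫ π) ≫ e1Q = vv'' ≫ (A'' ◁ (rightAdjointMate p)) := by
        rw [Category.assoc, hπe1]; exact hue1
      have s2 : (vv' ≫ ι₁) ≫ e1Q = 0 := by
        rw [Category.assoc, hι₁e1, Limits.comp_zero]
      have s3 : (vv'' ≫ ι₂) ≫ e1Q = vv'' ≫ (A'' ◁ (rightAdjointMate p)) := by
        rw [Category.assoc, hι₂e1]
      apply hjoint
      · rw [Preadditive.sub_comp, Preadditive.sub_comp, t1, t2, t3, sub_zero,
          sub_self]
      · rw [Preadditive.sub_comp, Preadditive.sub_comp, s1, s2, s3, sub_zero,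
          sub_self]
    rw [sub_sub, sub_eq_zero] at hδ
    exact hδ
  calc trC fm = uu ≫ ev' A := by rw [huu]; simp only [trC, Category.assoc]
    _ = uu ≫ π ≫ eQ := by rw [hπe]
    _ = (vv' ≫ ι₁ + vv'' ≫ ι₂) ≫ eQ := by rw [← Category.assoc, hdecomp]
    _ = vv' ≫ ev' A' + vv'' ≫ ev' A'' := by
        have q1 : (vv' ≫ ι₁) ≫ eQ = vv' ≫ ev' A' := by rw [Category.assoc, hι₁e]
        have q2 : (vv'' ≫ ι₂) ≫ eQ = vv'' ≫ ev' A'' := by rw [Category.assoc, hι₂e]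
        rw [Preadditive.add_comp, q1, q2]
    _ = trC f' + trC f'' := by
        rw [hvv', hvv'']; simp only [trC, Category.assoc]

end Abelian

end TraceAdditivity

theorem stmt7 [Abelian C] (S : ShortComplex C) (hS : S.ShortExact) (f : S ⟶ S) :
    trC f.τ₂ = trC f.τ₁ + trC f.τ₃ := by
  exact trace_additive_aux S.f S.g S.zero hS f.τ₁ f.τ₂ f.τ₃ f.comm₁₂.symm f.comm₂₃.symm
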